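/- Let n ∈ ℕ, n ≥ 1, let Y ∈ ℝ^{n×n} be symmetric positive semidefinite, let t : ℕ → ℕ be any sampling sequence, and let y : ℕ → ℝ^n be any signal with e = Δy the output of the associated delay operator. Then for every T ∈ ℕ, Σ_{s=0}^{T} ( y(s)ᵀ Y e(s) + (1/2)·y(s)ᵀ Y y(s) ) ≥ 0. (Input-feedforward passivity of the delay operator.) -/

import Mathlib

open Matrix Finset

/-- Input-feedforward passivity of the delay operator: for any symmetric positive
semidefinite multiplier `Y`, any sampling sequence `t` (strictly increasing, `t 0 = 0`),
any signal `y` with `e = Δ y` the output of the associated delay operator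
(`e s = ∑_{i = t k}^{s-1} y i` for `t k ≤ s < t (k+1)`), the passivity sum is nonnegative. -/
theorem delay_operator_input_feedforward_passive
    (n : ℕ) (hn : 1 ≤ n) (Y : Matrix (Fin n) (Fin n) ℝ) (hY : Y.PosSemidef)
    (t : ℕ → ℕ) (ht : StrictMono t) (ht0 : t 0 = 0)
    (y e : ℕ → Fin n → ℝ)
    (he : ∀ k s : ℕ, t k ≤ s → s < t (k + 1) →
      e s = ∑ i ∈ Finset.Ico (t k) s, y i) :
    ∀ T : ℕ, 0 ≤ ∑ s ∈ Finset.range (T + 1),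
      (y s ⬝ᵥ (Y *ᵥ e s) + (1 / 2) * (y s ⬝ᵥ (Y *ᵥ y s))) := by
  intro T
  -- symmetry of the quadratic form
  have hYt : Yᵀ = Y := by
    have := hY.1
    rwa [Matrix.IsHermitian, conjTranspose_eq_transpose_of_trivial] at this
  have hsym : ∀ u v : Fin n → ℝ, u ⬝ᵥ (Y *ᵥ v) = v ⬝ᵥ (Y *ᵥ u) := by
    intro u v
    rw [dotProduct_mulVec, ← mulVec_transpose, hYt, dotProduct_comm]
  -- quadratic form and its nonnegativity
  set φ : (Fin n → ℝ) → ℝ := fun v => v ⬝ᵥ (Y *ᵥ v) with hφ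
  have hφ0 : ∀ v, 0 ≤ φ v := fun v => hY.dotProduct_mulVec_nonneg v
  -- every s lies in some sampling interval
  have hexists : ∀ s : ℕ, ∃ k, t k ≤ s ∧ s < t (k + 1) := by
    intro s
    set P : ℕ → Prop := fun k => t k ≤ s with hP
    have hP0 : P 0 := by simp [hP, ht0]
    set K := Nat.findGreatest P s with hK
    have h1 : P K := Nat.findGreatest_spec (Nat.zero_le s) hP0
    have h2 : s < t (K + 1) := by
      by_contra h
      push_neg at h
      have hle : K + 1 ≤ s := le_trans (ht.le_apply) h
      exact Nat.findGreatest_is_greatest (Nat.lt_succ_self K) hle h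
    exact ⟨K, h1, h2⟩
  -- e 0 = 0
  have he0 : e 0 = 0 := by
    have h01 : t 0 < t 1 := ht Nat.one_pos
    have := he 0 0 (le_of_eq ht0) (by simpa [ht0] using h01)
    simpa using this
  -- each term dominates the telescoping difference
  have key : ∀ s : ℕ,
      (1/2) * φ (e (s+1)) - (1/2) * φ (e s)
        ≤ y s ⬝ᵥ (Y *ᵥ e s) + (1 / 2) * (y s ⬝ᵥ (Y *ᵥ y s)) := by
    intro s
    obtain ⟨k, hks, hsk⟩ := hexists s
    have hes : e s = ∑ i ∈ Finset.Ico (t k) s, y i := he k s hks hsk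
    have hid : y s ⬝ᵥ (Y *ᵥ e s) + (1 / 2) * (y s ⬝ᵥ (Y *ᵥ y s))
        = (1/2) * φ (e s + y s) - (1/2) * φ (e s) := by
      simp only [hφ, mulVec_add, dotProduct_add, add_dotProduct]
      rw [hsym (e s) (y s)]
      ring
    rw [hid]
    have hmain : φ (e (s+1)) ≤ φ (e s + y s) := by
      rcases eq_or_lt_of_le (Nat.succ_le_of_lt hsk) with h | h
      · -- s+1 = t (k+1) : reset, e (s+1) = 0
        have : e (s+1) = 0 := by
          have := he (k+1) (s+1) h.ge
            (lt_of_eq_of_lt h (ht (Nat.lt_succ_self (k+1))))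
          simpa [← h] using this
        rw [this]
        simpa [hφ] using hφ0 (e s + y s)
      · -- s+1 < t (k+1) : e (s+1) = e s + y s
        have : e (s+1) = e s + y s := by
          rw [he k (s+1) (le_trans hks (Nat.le_succ s)) h,
            Finset.sum_Ico_succ_top hks, hes]
        rw [this]
    linarith [hmain]
  calc (0:ℝ) ≤ (1/2) * φ (e (T+1)) - (1/2) * φ (e 0) := by
        rw [he0]
        simpa [hφ] using hφ0 (e (T+1))
    _ = ∑ s ∈ Finset.range (T + 1), ((1/2) * φ (e (s+1)) - (1/2) * φ (e s)) :=
        (Finset.sum_range_sub (fun s => (1/2) * φ (e s)) (T+1)).symm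
    _ ≤ _ := Finset.sum_le_sum fun s _ => key s
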